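/- Let K be a real Hilbert space, V : K → K a bounded linear self-adjoint operator which is ρ-strongly positive (⟨u, Vu⟩ ≥ ρ‖u‖² for all u ∈ K) for some ρ > 0 (so V is invertible with ‖V⁻¹‖ ≤ 1/ρ), and let Q : K → K be μ⁻¹-cocoercive for μ > 0. Then the operator B = V⁻¹ ∘ Q is (μ⁻¹ρ)-cocoercive with respect to the inner product ⟨u, w⟩_V = ⟨u, Vw⟩, i.e. for all u, w ∈ K: ⟨u − w, Bu − Bw⟩_V ≥ μ⁻¹ρ ‖Bu − Bw‖_V², where ‖·‖_V is the norm induced by ⟨·,·⟩_V. -/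

import Mathlib

open scoped RealInnerProductSpace
open Filter Topology

noncomputable section

theorem stmt8
    {K : Type*} [NormedAddCommGroup K] [InnerProductSpace ℝ K] [CompleteSpace K]
    (V : K →L[ℝ] K) (hVsa : ∀ u w : K, ⟪V u, w⟫ = ⟪u, V w⟫)
    (ρ : ℝ) (hρ : 0 < ρ) (hVpos : ∀ u : K, ρ * ‖u‖ ^ 2 ≤ ⟪u, V u⟫)
    -- `V` is invertible with `‖V⁻¹‖ ≤ 1/ρ`; `W` denotes its inverse
    (W : K →L[ℝ] K) (hWV : ∀ u : K, W (V u) = u) (hVW : ∀ u : K, V (W u) = u)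
    (hWnorm : ‖W‖ ≤ 1 / ρ)
    (μ : ℝ) (hμ : 0 < μ)
    (Q : K → K) (hQ : ∀ u w : K, μ⁻¹ * ‖Q u - Q w‖ ^ 2 ≤ ⟪u - w, Q u - Q w⟫)
    -- `B = V⁻¹ ∘ Q`
    (B : K → K) (hB : ∀ u, B u = W (Q u)) :
    ∀ u w : K, μ⁻¹ * ρ * ⟪B u - B w, V (B u - B w)⟫ ≤ ⟪u - w, V (B u - B w)⟫ := by
  intro u w
  have hBdiff : B u - B w = W (Q u - Q w) := by rw [hB, hB, map_sub]
  have hVB : V (B u - B w) = Q u - Q w := by rw [hBdiff, hVW]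
  rw [hVB]
  have h1 : μ⁻¹ * ‖Q u - Q w‖ ^ 2 ≤ ⟪u - w, Q u - Q w⟫ := hQ u w
  have h2 : ⟪B u - B w, Q u - Q w⟫ ≤ ρ⁻¹ * ‖Q u - Q w‖ ^ 2 := by
    calc ⟪B u - B w, Q u - Q w⟫ ≤ ‖B u - B w‖ * ‖Q u - Q w‖ :=
          real_inner_le_norm _ _
      _ ≤ (ρ⁻¹ * ‖Q u - Q w‖) * ‖Q u - Q w‖ := by
          apply mul_le_mul_of_nonneg_right _ (norm_nonneg _)
          rw [hBdiff]
          calc ‖W (Q u - Q w)‖ ≤ ‖W‖ * ‖Q u - Q w‖ := W.le_opNorm _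
            _ ≤ ρ⁻¹ * ‖Q u - Q w‖ := by
                apply mul_le_mul_of_nonneg_right _ (norm_nonneg _)
                simpa [one_div] using hWnorm
      _ = ρ⁻¹ * ‖Q u - Q w‖ ^ 2 := by ring
  calc μ⁻¹ * ρ * ⟪B u - B w, Q u - Q w⟫
      ≤ μ⁻¹ * ρ * (ρ⁻¹ * ‖Q u - Q w‖ ^ 2) := by
        apply mul_le_mul_of_nonneg_left h2
        positivity
    _ = μ⁻¹ * ‖Q u - Q w‖ ^ 2 := by field_simp
    _ ≤ ⟪u - w, Q u - Q w⟫ := h1
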